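/- arXiv:2110.09616 — 4 statements merged into one kernel-verified Lean document; each statement's English description precedes it below -/
import Mathlib

section
/- Let X and Y be n×s complex matrices, each with orthonormal columns. Then ‖X − Y Yᴴ X‖₂ = ‖X Xᴴ − Y Yᴴ‖₂, i.e., the spectral norm of X minus the orthogonal projection of X onto the column space of Y equals the spectral norm of the difference of the two orthogonal projections. -/
open scoped Matrix Matrix.Norms.L2Operator

/-- Spectral (operator 2-) norm of a complex matrix: the operator norm induced by the
Euclidean norms on the domain and codomain. -/
noncomputable def specNorm {m n : Type*} [Fintype m] [Fintype n] [DecidableEq n]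
    (A : Matrix m n ℂ) : ℝ := ‖A‖

/-- The singular values (unordered, indexed by the column index type) of a complex matrix:
the square roots of the eigenvalues of the Hermitian matrix `Aᴴ * A`. -/
noncomputable def singularValues {m n : Type*} [Fintype m] [Fintype n] [DecidableEq n]
    (A : Matrix m n ℂ) : n → ℝ :=
  fun i => Real.sqrt ((Matrix.isHermitian_conjTranspose_mul_self A).eigenvalues i)

noncomputable instance auxCStar (s : ℕ) : CStarAlgebra (Matrix (Fin s) (Fin s) ℂ) := { }

lemma aux_norm_one_le (s : ℕ) : ‖(1 : Matrix (Fin s) (Fin s) ℂ)‖ ≤ 1 := by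
  have h := Matrix.l2_opNorm_conjTranspose_mul_self (1 : Matrix (Fin s) (Fin s) ℂ)
  simp only [Matrix.conjTranspose_one, mul_one] at h
  nlinarith [norm_nonneg (1 : Matrix (Fin s) (Fin s) ℂ)]

lemma aux_norm_le_one {n s : ℕ} (X : Matrix (Fin n) (Fin s) ℂ) (hX : Xᴴ * X = 1) :
    ‖X‖ ≤ 1 := by
  have h := Matrix.l2_opNorm_conjTranspose_mul_self X
  rw [hX] at h
  have h1 := aux_norm_one_le s
  nlinarith [norm_nonneg X]

lemma aux_spec_swap (s : ℕ) (M : Matrix (Fin s) (Fin s) ℂ) :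
    spectrum ℂ (Mᴴ * M) = spectrum ℂ (M * Mᴴ) := by
  have h := spectrum.nonzero_mul_comm (𝕜 := ℂ) Mᴴ M
  ext z
  by_cases hz : z = 0
  · subst hz
    simp only [spectrum.zero_mem_iff]
    rw [Matrix.isUnit_iff_isUnit_det, Matrix.isUnit_iff_isUnit_det, Matrix.det_mul,
      Matrix.det_mul, mul_comm]
  · constructor <;> intro hm
    · have h2 : z ∈ spectrum ℂ (Mᴴ * M) \ {0} := ⟨hm, hz⟩
      rw [h] at h2; exact h2.1
    · have h2 : z ∈ spectrum ℂ (M * Mᴴ) \ {0} := ⟨hm, hz⟩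
      rw [← h] at h2; exact h2.1

set_option maxHeartbeats 1000000 in
lemma aux_norm_one_sub_swap (s : ℕ) (M : Matrix (Fin s) (Fin s) ℂ) :
    ‖1 - Mᴴ * M‖ = ‖1 - M * Mᴴ‖ := by
  have hsa1 : IsSelfAdjoint (1 - Mᴴ * M) := by
    simp [IsSelfAdjoint, star_sub, star_one, star_mul, Matrix.star_eq_conjTranspose,
      Matrix.conjTranspose_mul]
  have hsa2 : IsSelfAdjoint (1 - M * Mᴴ) := by
    simp [IsSelfAdjoint, star_sub, star_one, star_mul, Matrix.star_eq_conjTranspose,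
      Matrix.conjTranspose_mul]
  have hspec : spectrum ℂ (1 - Mᴴ * M) = spectrum ℂ (1 - M * Mᴴ) := by
    have h1 := spectrum.singleton_sub_eq (Mᴴ * M) (1 : ℂ)
    have h2 := spectrum.singleton_sub_eq (M * Mᴴ) (1 : ℂ)
    rw [map_one] at h1 h2
    rw [← h1, ← h2, aux_spec_swap]
  have hr : spectralRadius ℂ (1 - Mᴴ * M) = spectralRadius ℂ (1 - M * Mᴴ) := by
    unfold spectralRadius; rw [hspec]
  have h := hsa1.spectralRadius_eq_nnnorm
  rw [hr, hsa2.spectralRadius_eq_nnnorm] at h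
  exact (congrArg (fun x : NNReal => (x : ℝ)) (ENNReal.coe_injective h)).symm

lemma aux_expand {n s : ℕ} (X : Matrix (Fin n) (Fin s) ℂ) (Q : Matrix (Fin n) (Fin n) ℂ)
    (hX : Xᴴ * X = 1) (hQ : Qᴴ = Q) (hQQ : Q * Q = Q) :
    (X - Q * X)ᴴ * (X - Q * X) = 1 - Xᴴ * (Q * X) := by
  have h1 : (X - Q * X)ᴴ = Xᴴ - Xᴴ * Q := by
    rw [Matrix.conjTranspose_sub, Matrix.conjTranspose_mul, hQ]
  have hQ2 : Q * (Q * X) = Q * X := by rw [← Matrix.mul_assoc, hQQ]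
  rw [h1, Matrix.sub_mul, Matrix.mul_sub, Matrix.mul_sub, hX]
  simp only [Matrix.mul_assoc, hQ2]
  abel

/-- `‖X - Q X‖ = ‖Y - P Y‖`. -/
lemma aux_ab_eq {n s : ℕ} (X Y : Matrix (Fin n) (Fin s) ℂ)
    (hX : Xᴴ * X = 1) (hY : Yᴴ * Y = 1) :
    ‖X - Y * Yᴴ * X‖ = ‖Y - X * Xᴴ * Y‖ := by
  set M := Yᴴ * X with hM
  have hQ : (Y * Yᴴ)ᴴ = Y * Yᴴ := by
    simp [Matrix.conjTranspose_mul]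
  have hQQ : (Y * Yᴴ) * (Y * Yᴴ) = Y * Yᴴ := by
    have : Yᴴ * (Y * Yᴴ) = Yᴴ := by rw [← Matrix.mul_assoc, hY, Matrix.one_mul]
    rw [Matrix.mul_assoc, this]
  have hP : (X * Xᴴ)ᴴ = X * Xᴴ := by
    simp [Matrix.conjTranspose_mul]
  have hPP : (X * Xᴴ) * (X * Xᴴ) = X * Xᴴ := by
    have : Xᴴ * (X * Xᴴ) = Xᴴ := by rw [← Matrix.mul_assoc, hX, Matrix.one_mul]
    rw [Matrix.mul_assoc, this]
  have e1 : (X - Y * Yᴴ * X)ᴴ * (X - Y * Yᴴ * X) = 1 - Mᴴ * M := by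
    rw [aux_expand X (Y * Yᴴ) hX hQ hQQ]
    rw [hM]
    simp only [Matrix.conjTranspose_mul, Matrix.conjTranspose_conjTranspose, Matrix.mul_assoc]
  have e2 : (Y - X * Xᴴ * Y)ᴴ * (Y - X * Xᴴ * Y) = 1 - M * Mᴴ := by
    rw [aux_expand Y (X * Xᴴ) hY hP hPP]
    rw [hM]
    simp only [Matrix.conjTranspose_mul, Matrix.conjTranspose_conjTranspose, Matrix.mul_assoc]
  have n1 := Matrix.l2_opNorm_conjTranspose_mul_self (X - Y * Yᴴ * X)
  have n2 := Matrix.l2_opNorm_conjTranspose_mul_self (Y - X * Xᴴ * Y)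
  rw [e1] at n1
  rw [e2] at n2
  have key : ‖X - Y * Yᴴ * X‖ * ‖X - Y * Yᴴ * X‖ = ‖Y - X * Xᴴ * Y‖ * ‖Y - X * Xᴴ * Y‖ := by
    rw [← n1, ← n2, aux_norm_one_sub_swap]
  calc ‖X - Y * Yᴴ * X‖ = Real.sqrt (‖X - Y * Yᴴ * X‖ * ‖X - Y * Yᴴ * X‖) :=
        (Real.sqrt_mul_self (norm_nonneg _)).symm
    _ = Real.sqrt (‖Y - X * Xᴴ * Y‖ * ‖Y - X * Xᴴ * Y‖) := by rw [key]
    _ = ‖Y - X * Xᴴ * Y‖ := Real.sqrt_mul_self (norm_nonneg _)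

/-- one-sided norm is at most the norm of the projection difference -/
lemma aux_one_side_le {n s : ℕ} (X Y : Matrix (Fin n) (Fin s) ℂ)
    (hX : Xᴴ * X = 1) (hY : Yᴴ * Y = 1) :
    ‖X - Y * Yᴴ * X‖ ≤ ‖X * Xᴴ - Y * Yᴴ‖ := by
  have h1 : (X * Xᴴ - Y * Yᴴ) * X = X - Y * Yᴴ * X := by
    rw [Matrix.sub_mul, Matrix.mul_assoc, hX, Matrix.mul_one]
  calc ‖X - Y * Yᴴ * X‖ = ‖(X * Xᴴ - Y * Yᴴ) * X‖ := by rw [h1]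
    _ ≤ ‖X * Xᴴ - Y * Yᴴ‖ * ‖X‖ := Matrix.l2_opNorm_mul _ _
    _ ≤ ‖X * Xᴴ - Y * Yᴴ‖ * 1 := by
        exact mul_le_mul_of_nonneg_left (aux_norm_le_one X hX) (norm_nonneg _)
    _ = ‖X * Xᴴ - Y * Yᴴ‖ := mul_one _


set_option maxHeartbeats 1000000 in
lemma aux_upper_abstract {n : ℕ} (P Q : Matrix (Fin n) (Fin n) ℂ)
    (hPH : Pᴴ = P) (hQH : Qᴴ = Q) (hPP : P * P = P) (hQQ : Q * Q = Q)
    (a b : ℝ) (ha0 : 0 ≤ a) (hb0 : 0 ≤ b)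
    (hUn : ‖P - Q * P‖ ≤ a) (hVn : ‖Q - Q * P‖ ≤ b) :
    ‖P - Q‖ ≤ max a b := by
  have hac : a ≤ max a b := le_max_left _ _
  have hbc : b ≤ max a b := le_max_right _ _
  have hc0 : 0 ≤ max a b := le_trans ha0 hac
  have hQ2 : Q * (Q * P) = Q * P := by rw [← Matrix.mul_assoc, hQQ]
  have hUP : (P - Q * P) * P = P - Q * P := by
    rw [Matrix.sub_mul, hPP, Matrix.mul_assoc, hPP]
  have hVP : (Q - Q * P) * P = 0 := by
    rw [Matrix.sub_mul, Matrix.mul_assoc, hPP, sub_self]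
  have hUV : (P - Q * P)ᴴ * (Q - Q * P) = 0 := by
    rw [Matrix.conjTranspose_sub, Matrix.conjTranspose_mul, hPH, hQH]
    simp only [Matrix.sub_mul, Matrix.mul_sub, Matrix.mul_assoc, hQQ, hQ2]
    abel
  have hP1P : Pᴴ * (1 - P) = 0 := by
    rw [hPH, Matrix.mul_sub, Matrix.mul_one, hPP, sub_self]
  have hT : P - Q = (P - Q * P) - (Q - Q * P) := by abel
  rw [hT, Matrix.l2_opNorm_def]
  refine ContinuousLinearMap.opNorm_le_bound _ hc0 fun x => ?_
  set w : Fin n → ℂ := WithLp.equiv 2 (Fin n → ℂ) x with hw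
  set p : EuclideanSpace ℂ (Fin n) := (WithLp.equiv 2 (Fin n → ℂ)).symm (P *ᵥ w) with hp
  set q : EuclideanSpace ℂ (Fin n) := (WithLp.equiv 2 (Fin n → ℂ)).symm ((1 - P) *ᵥ w) with hq
  set u : EuclideanSpace ℂ (Fin n) := (WithLp.equiv 2 (Fin n → ℂ)).symm ((P - Q * P) *ᵥ w) with hu
  set v : EuclideanSpace ℂ (Fin n) := (WithLp.equiv 2 (Fin n → ℂ)).symm ((Q - Q * P) *ᵥ w) with hv
  have hmv : ∀ (A : Matrix (Fin n) (Fin n) ℂ) (z : Fin n → ℂ),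
      ‖((WithLp.equiv 2 (Fin n → ℂ)).symm (A *ᵥ z) : EuclideanSpace ℂ (Fin n))‖
        ≤ ‖A‖ * ‖((WithLp.equiv 2 (Fin n → ℂ)).symm z : EuclideanSpace ℂ (Fin n))‖ :=
    fun A z => Matrix.l2_opNorm_mulVec A ((WithLp.equiv 2 (Fin n → ℂ)).symm z)
  have hinner_uv : inner ℂ u v = 0 := by
    rw [hu, hv, WithLp.equiv_symm_apply, EuclideanSpace.inner_toLp_toLp, dotProduct_comm, Matrix.star_mulVec,
      Matrix.dotProduct_mulVec, Matrix.vecMul_vecMul, hUV]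
    simp
  have hinner_pq : inner ℂ p q = 0 := by
    rw [hp, hq, WithLp.equiv_symm_apply, EuclideanSpace.inner_toLp_toLp, dotProduct_comm, Matrix.star_mulVec,
      Matrix.dotProduct_mulVec, Matrix.vecMul_vecMul, hP1P]
    simp
  have hx_split : p + q = x := by
    rw [hp, hq, WithLp.equiv_symm_apply, ← WithLp.toLp_add, ← Matrix.add_mulVec]
    simp only [add_sub_cancel]
    rw [Matrix.one_mulVec, hw]
    exact (WithLp.equiv 2 (Fin n → ℂ)).symm_apply_apply x
  have hpyth : ‖x‖ ^ 2 = ‖p‖ ^ 2 + ‖q‖ ^ 2 := by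
    rw [← hx_split, norm_add_sq (𝕜 := ℂ), hinner_pq]
    simp
  have hsub : ‖u - v‖ ^ 2 = ‖u‖ ^ 2 + ‖v‖ ^ 2 := by
    rw [norm_sub_sq (𝕜 := ℂ), hinner_uv]
    simp
  have hu_le : ‖u‖ ≤ a * ‖p‖ := by
    have h1 : (P - Q * P) *ᵥ w = (P - Q * P) *ᵥ (P *ᵥ w) := by
      rw [Matrix.mulVec_mulVec, hUP]
    calc ‖u‖ = ‖((WithLp.equiv 2 (Fin n → ℂ)).symm ((P - Q * P) *ᵥ (P *ᵥ w)) :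
          EuclideanSpace ℂ (Fin n))‖ := by rw [hu, h1]
      _ ≤ ‖P - Q * P‖ * ‖p‖ := hmv (P - Q * P) (P *ᵥ w)
      _ ≤ a * ‖p‖ := mul_le_mul_of_nonneg_right hUn (norm_nonneg _)
  have hv_le : ‖v‖ ≤ b * ‖q‖ := by
    have h0 : (Q - Q * P) * (1 - P) = Q - Q * P := by
      rw [Matrix.mul_sub, Matrix.mul_one, hVP, sub_zero]
    have h1 : (Q - Q * P) *ᵥ w = (Q - Q * P) *ᵥ ((1 - P) *ᵥ w) := by
      rw [Matrix.mulVec_mulVec, h0]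
    calc ‖v‖ = ‖((WithLp.equiv 2 (Fin n → ℂ)).symm ((Q - Q * P) *ᵥ ((1 - P) *ᵥ w)) :
          EuclideanSpace ℂ (Fin n))‖ := by rw [hv, h1]
      _ ≤ ‖Q - Q * P‖ * ‖q‖ := hmv (Q - Q * P) ((1 - P) *ᵥ w)
      _ ≤ b * ‖q‖ := mul_le_mul_of_nonneg_right hVn (norm_nonneg _)
  have happ : ((Matrix.toEuclideanLin.trans LinearMap.toContinuousLinearMap)
      ((P - Q * P) - (Q - Q * P))) x = u - v := by
    show (WithLp.equiv 2 (Fin n → ℂ)).symm (((P - Q * P) - (Q - Q * P)) *ᵥ w) = u - v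
    rw [Matrix.sub_mulVec, hu, hv, WithLp.equiv_symm_apply, WithLp.toLp_sub]
  have hfinal_sq : ‖u - v‖ ^ 2 ≤ (max a b * ‖x‖) ^ 2 := by
    have h1 : ‖u‖ ^ 2 ≤ (max a b) ^ 2 * ‖p‖ ^ 2 := by
      have k1 := pow_le_pow_left₀ (norm_nonneg u) hu_le 2
      have k2 := pow_le_pow_left₀ ha0 hac 2
      nlinarith [sq_nonneg (‖p‖)]
    have h2 : ‖v‖ ^ 2 ≤ (max a b) ^ 2 * ‖q‖ ^ 2 := by
      have k1 := pow_le_pow_left₀ (norm_nonneg v) hv_le 2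
      have k2 := pow_le_pow_left₀ hb0 hbc 2
      nlinarith [sq_nonneg (‖q‖)]
    calc ‖u - v‖ ^ 2 = ‖u‖ ^ 2 + ‖v‖ ^ 2 := hsub
      _ ≤ (max a b) ^ 2 * ‖p‖ ^ 2 + (max a b) ^ 2 * ‖q‖ ^ 2 := add_le_add h1 h2
      _ = (max a b) ^ 2 * (‖p‖ ^ 2 + ‖q‖ ^ 2) := by ring
      _ = (max a b) ^ 2 * ‖x‖ ^ 2 := by rw [← hpyth]
      _ = (max a b * ‖x‖) ^ 2 := by ring
  rw [happ]
  have h2 := Real.sqrt_le_sqrt hfinal_sq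
  rwa [Real.sqrt_sq (norm_nonneg _), Real.sqrt_sq (by positivity)] at h2

/-- For `n × s` complex matrices `X`, `Y` with orthonormal columns,
`‖X − Y Yᴴ X‖₂ = ‖X Xᴴ − Y Yᴴ‖₂`. -/
theorem norm_sub_projection_eq_norm_proj_sub (n s : ℕ)
    (X Y : Matrix (Fin n) (Fin s) ℂ) (hX : Xᴴ * X = 1) (hY : Yᴴ * Y = 1) :
    specNorm (X - Y * Yᴴ * X) = specNorm (X * Xᴴ - Y * Yᴴ) := by
  show ‖X - Y * Yᴴ * X‖ = ‖X * Xᴴ - Y * Yᴴ‖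
  refine le_antisymm (aux_one_side_le X Y hX hY) ?_
  have hPH : (X * Xᴴ)ᴴ = X * Xᴴ := by simp [Matrix.conjTranspose_mul]
  have hQH : (Y * Yᴴ)ᴴ = Y * Yᴴ := by simp [Matrix.conjTranspose_mul]
  have hPP : (X * Xᴴ) * (X * Xᴴ) = X * Xᴴ := by
    have h : Xᴴ * (X * Xᴴ) = Xᴴ := by rw [← Matrix.mul_assoc, hX, Matrix.one_mul]
    rw [Matrix.mul_assoc, h]
  have hQQ : (Y * Yᴴ) * (Y * Yᴴ) = Y * Yᴴ := by
    have h : Yᴴ * (Y * Yᴴ) = Yᴴ := by rw [← Matrix.mul_assoc, hY, Matrix.one_mul]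
    rw [Matrix.mul_assoc, h]
  have hUn : ‖X * Xᴴ - Y * Yᴴ * (X * Xᴴ)‖ ≤ ‖X - Y * Yᴴ * X‖ := by
    have h1 : X * Xᴴ - Y * Yᴴ * (X * Xᴴ) = (X - Y * Yᴴ * X) * Xᴴ := by
      simp only [Matrix.sub_mul, Matrix.mul_assoc]
    calc ‖X * Xᴴ - Y * Yᴴ * (X * Xᴴ)‖ = ‖(X - Y * Yᴴ * X) * Xᴴ‖ := by rw [h1]
      _ ≤ ‖X - Y * Yᴴ * X‖ * ‖Xᴴ‖ := Matrix.l2_opNorm_mul _ _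
      _ ≤ ‖X - Y * Yᴴ * X‖ * 1 := by
          rw [Matrix.l2_opNorm_conjTranspose]
          exact mul_le_mul_of_nonneg_left (aux_norm_le_one X hX) (norm_nonneg _)
      _ = ‖X - Y * Yᴴ * X‖ := mul_one _
  have hVn : ‖Y * Yᴴ - Y * Yᴴ * (X * Xᴴ)‖ ≤ ‖Y - X * Xᴴ * Y‖ := by
    have h1 : Y * Yᴴ - Y * Yᴴ * (X * Xᴴ) = Y * (Y - X * Xᴴ * Y)ᴴ := by
      rw [Matrix.conjTranspose_sub, Matrix.conjTranspose_mul, hPH]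
      simp only [Matrix.mul_sub, Matrix.mul_assoc]
    calc ‖Y * Yᴴ - Y * Yᴴ * (X * Xᴴ)‖ = ‖Y * (Y - X * Xᴴ * Y)ᴴ‖ := by rw [h1]
      _ ≤ ‖Y‖ * ‖(Y - X * Xᴴ * Y)ᴴ‖ := Matrix.l2_opNorm_mul _ _
      _ ≤ 1 * ‖(Y - X * Xᴴ * Y)ᴴ‖ := by
          exact mul_le_mul_of_nonneg_right (aux_norm_le_one Y hY) (norm_nonneg _)
      _ = ‖Y - X * Xᴴ * Y‖ := by rw [one_mul, Matrix.l2_opNorm_conjTranspose]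
  have h := aux_upper_abstract (X * Xᴴ) (Y * Yᴴ) hPH hQH hPP hQQ
    ‖X - Y * Yᴴ * X‖ ‖Y - X * Xᴴ * Y‖ (norm_nonneg _) (norm_nonneg _) hUn hVn
  rwa [← aux_ab_eq X Y hX hY, max_self] at h
end

section
/- Let U be an m×s complex matrix with orthonormal columns (s ≤ m−1). Let U_f be the (m−1)×s matrix obtained from U by deleting its first row, and U_l the (m−1)×s matrix obtained by deleting its last row, and assume both U_f and U_l have full column rank s. Define E = U_f − U_l U_l† U_f, where U_l† is the Moore–Penrose pseudo-inverse. Then ‖E‖₂ ≤ ‖P_f − P_l‖₂ = sin θ₁, where P_f and P_l are the orthogonal projections onto the column spaces of U_f and U_l, and θ₁ is the largest principal angle between these column spaces. -/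
open scoped Matrix Matrix.Norms.L2Operator ComplexOrder

/-- The positive semidefinite square root of a positive semidefinite matrix
(the definition removed from Mathlib, restored with its old meaning). -/
noncomputable def Matrix.PosSemidef.sqrt {n 𝕜 : Type*} [Fintype n] [DecidableEq n] [RCLike 𝕜]
    {A : Matrix n n 𝕜} (hA : A.PosSemidef) : Matrix n n 𝕜 :=
  hA.1.eigenvectorUnitary.1 * Matrix.diagonal ((↑) ∘ (√·) ∘ hA.1.eigenvalues) *
  (star hA.1.eigenvectorUnitary : Matrix n n 𝕜)

set_option linter.unusedSectionVars false
set_option maxHeartbeats 1600000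

namespace EsterAux

open Matrix

variable {n s : Type*} [Fintype n] [DecidableEq n] [Fintype s] [DecidableEq s]

lemma psd_sqrt_mul_self {A : Matrix n n ℂ} (hA : A.PosSemidef) : hA.sqrt * hA.sqrt = A := by
  have hU : (star hA.1.eigenvectorUnitary : Matrix n n ℂ) * hA.1.eigenvectorUnitary.1 = 1 :=
    Unitary.coe_star_mul_self _
  have hD : Matrix.diagonal ((RCLike.ofReal ∘ (√·) ∘ hA.1.eigenvalues) : n → ℂ) *
      Matrix.diagonal ((RCLike.ofReal ∘ (√·) ∘ hA.1.eigenvalues) : n → ℂ) =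
      Matrix.diagonal (RCLike.ofReal ∘ hA.1.eigenvalues) := by
    rw [Matrix.diagonal_mul_diagonal]
    congr 1
    funext i
    simp only [Function.comp_apply]
    rw [← RCLike.ofReal_mul, Real.mul_self_sqrt (hA.eigenvalues_nonneg i)]
  conv_rhs => rw [hA.1.spectral_theorem, Unitary.conjStarAlgAut_apply, ← hD]
  unfold Matrix.PosSemidef.sqrt
  simp only [Matrix.mul_assoc]
  rw [← Matrix.mul_assoc (star hA.1.eigenvectorUnitary : Matrix n n ℂ), hU, Matrix.one_mul]

lemma psd_sqrt_herm {A : Matrix n n ℂ} (hA : A.PosSemidef) : hA.sqrtᴴ = hA.sqrt := by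
  unfold Matrix.PosSemidef.sqrt
  rw [Matrix.conjTranspose_mul, Matrix.conjTranspose_mul, Matrix.diagonal_conjTranspose,
    ← Matrix.star_eq_conjTranspose, ← Matrix.star_eq_conjTranspose, star_star,
    Matrix.mul_assoc]
  congr 2
  ext i j
  by_cases h : i = j <;> simp [Matrix.diagonal_apply, h]

lemma norm_one_le : ‖(1 : Matrix n n ℂ)‖ ≤ 1 := by
  rw [Matrix.l2_opNorm_def]
  refine ContinuousLinearMap.opNorm_le_bound _ zero_le_one fun x => ?_
  rw [one_mul]
  apply le_of_eq
  congr 1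
  show Matrix.toEuclideanLin (1 : Matrix n n ℂ) x = x
  rw [Matrix.toEuclideanLin_apply, Matrix.one_mulVec]

lemma norm_le_bound (A : Matrix n s ℂ) (c : ℝ) (hc : 0 ≤ c)
    (h : ∀ x : s → ℂ, ‖(WithLp.equiv 2 (n → ℂ)).symm (A *ᵥ x)‖ ≤
      c * ‖(WithLp.equiv 2 (s → ℂ)).symm x‖) : ‖A‖ ≤ c := by
  rw [Matrix.l2_opNorm_def]
  refine ContinuousLinearMap.opNorm_le_bound _ hc fun x => ?_
  have h2 := h ((WithLp.equiv 2 (s → ℂ)) x)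
  rw [Equiv.symm_apply_apply] at h2
  exact h2

lemma mulVec_norm_le (A : Matrix n s ℂ) (x : s → ℂ) :
    ‖(WithLp.equiv 2 (n → ℂ)).symm (A *ᵥ x)‖ ≤
      ‖A‖ * ‖(WithLp.equiv 2 (s → ℂ)).symm x‖ := by
  have := A.l2_opNorm_mulVec ((WithLp.equiv 2 (s → ℂ)).symm x)
  simpa using this

lemma norm_isometry_le_one {A : Matrix n s ℂ} (hA : Aᴴ * A = 1) : ‖A‖ ≤ 1 := by
  have h2 : ‖A‖ * ‖A‖ = ‖(1 : Matrix s s ℂ)‖ := by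
    rw [← hA, Matrix.l2_opNorm_conjTranspose_mul_self]
  nlinarith [norm_one_le (n := s), norm_nonneg A]

lemma norm_conj {A : Matrix n s ℂ} (hA : Aᴴ * A = 1) (M : Matrix s s ℂ) :
    ‖A * M * Aᴴ‖ = ‖M‖ := by
  have hA1 : ‖A‖ ≤ 1 := norm_isometry_le_one hA
  have hA2 : ‖Aᴴ‖ ≤ 1 := by rw [Matrix.l2_opNorm_conjTranspose]; exact hA1
  refine le_antisymm ?_ ?_
  · calc ‖A * M * Aᴴ‖ ≤ ‖A * M‖ * ‖Aᴴ‖ := Matrix.l2_opNorm_mul _ _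
      _ ≤ ‖A‖ * ‖M‖ * ‖Aᴴ‖ := by
        have := Matrix.l2_opNorm_mul A M
        nlinarith [norm_nonneg Aᴴ, norm_nonneg (A * M)]
      _ ≤ 1 * ‖M‖ * 1 := by gcongr
      _ = ‖M‖ := by ring
  · have hM : Aᴴ * (A * M * Aᴴ) * A = M := by
      rw [Matrix.mul_assoc A M Aᴴ, ← Matrix.mul_assoc Aᴴ A (M * Aᴴ), hA, Matrix.one_mul,
        Matrix.mul_assoc M Aᴴ A, hA, Matrix.mul_one]
    conv_lhs => rw [← hM]
    calc ‖Aᴴ * (A * M * Aᴴ) * A‖ ≤ ‖Aᴴ * (A * M * Aᴴ)‖ * ‖A‖ := Matrix.l2_opNorm_mul _ _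
      _ ≤ ‖Aᴴ‖ * ‖A * M * Aᴴ‖ * ‖A‖ := by
        have := Matrix.l2_opNorm_mul Aᴴ (A * M * Aᴴ)
        nlinarith [norm_nonneg A, norm_nonneg (Aᴴ * (A * M * Aᴴ))]
      _ ≤ 1 * ‖A * M * Aᴴ‖ * 1 := by gcongr
      _ = ‖A * M * Aᴴ‖ := by ring

lemma norm_symm_eq (y : n → ℂ) :
    ‖(WithLp.equiv 2 (n → ℂ)).symm y‖ = Real.sqrt (∑ i, ‖y i‖ ^ 2) := by
  rw [EuclideanSpace.norm_eq]
  congr 1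

lemma norm_diagonal [Nonempty n] (v : n → ℂ) :
    ‖Matrix.diagonal v‖ = ⨆ i, ‖v i‖ := by
  have hbdd : BddAbove (Set.range fun i => ‖v i‖) :=
    Set.Finite.bddAbove (Set.finite_range _)
  have hc : 0 ≤ ⨆ i, ‖v i‖ :=
    le_trans (norm_nonneg _) (le_ciSup hbdd (Classical.arbitrary n))
  refine le_antisymm ?_ (ciSup_le fun j => ?_)
  · refine norm_le_bound _ _ hc fun x => ?_
    rw [norm_symm_eq, norm_symm_eq]
    have : (⨆ i, ‖v i‖) * Real.sqrt (∑ i, ‖x i‖ ^ 2) =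
        Real.sqrt ((⨆ i, ‖v i‖) ^ 2 * ∑ i, ‖x i‖ ^ 2) := by
      rw [Real.sqrt_mul (sq_nonneg _), Real.sqrt_sq hc]
    rw [this]
    apply Real.sqrt_le_sqrt
    rw [Finset.mul_sum]
    apply Finset.sum_le_sum
    intro i _
    have h1 : ‖(Matrix.diagonal v *ᵥ x) i‖ = ‖v i‖ * ‖x i‖ := by
      rw [Matrix.mulVec_diagonal, norm_mul]
    rw [h1, mul_pow]
    have h2 : ‖v i‖ ≤ ⨆ k, ‖v k‖ := le_ciSup hbdd i
    gcongr
  · have h := mulVec_norm_le (Matrix.diagonal v) (Pi.single j 1)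
    have h1 : Matrix.diagonal v *ᵥ Pi.single j 1 = Pi.single j (v j) := by
      ext i
      rw [Matrix.mulVec_diagonal]
      rcases eq_or_ne i j with rfl | hij
      · simp
      · simp [Pi.single_eq_of_ne hij]
    rw [h1] at h
    have h2 : ‖(WithLp.equiv 2 (n → ℂ)).symm (Pi.single j (v j))‖ = ‖v j‖ := by
      rw [WithLp.equiv_symm_apply, PiLp.norm_toLp_single]
    have h3 : ‖(WithLp.equiv 2 (n → ℂ)).symm (Pi.single j (1 : ℂ))‖ = 1 := by
      rw [WithLp.equiv_symm_apply, PiLp.norm_toLp_single, norm_one]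
    rw [h2, h3, mul_one] at h
    exact h

/-- eigenvalues are at most 1 when `1 - H` is PSD -/
lemma eigenvalues_le_one {H : Matrix s s ℂ} (hHerm : H.IsHermitian)
    (h1 : (1 - H).PosSemidef) (i : s) : hHerm.eigenvalues i ≤ 1 := by
  have hnorm : RCLike.re (dotProduct (star ⇑(hHerm.eigenvectorBasis i))
      ⇑(hHerm.eigenvectorBasis i)) = 1 := by
    have h2 : (inner ℂ (hHerm.eigenvectorBasis i) (hHerm.eigenvectorBasis i) : ℂ)
        = dotProduct (star ⇑(hHerm.eigenvectorBasis i)) ⇑(hHerm.eigenvectorBasis i) :=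
      (EuclideanSpace.inner_eq_star_dotProduct _ _).trans (dotProduct_comm _ _)
    have h3 : ‖hHerm.eigenvectorBasis i‖ = 1 := hHerm.eigenvectorBasis.orthonormal.1 i
    rw [← h2, inner_self_eq_norm_sq_to_K, h3]
    norm_num
  have hpos := h1.re_dotProduct_nonneg ⇑(hHerm.eigenvectorBasis i)
  rw [Matrix.sub_mulVec, Matrix.one_mulVec, dotProduct_sub, map_sub, hnorm] at hpos
  have he := hHerm.eigenvalues_eq i
  rw [he]
  linarith [hpos]

/-- spectral decomposition of `1 - H` and its norm -/
lemma norm_one_sub_psd [Nonempty s] {H : Matrix s s ℂ} (hHerm : H.IsHermitian)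
    (h1 : (1 - H).PosSemidef) :
    ‖(1 : Matrix s s ℂ) - H‖ = 1 - ⨅ i, hHerm.eigenvalues i := by
  set V : Matrix s s ℂ := (hHerm.eigenvectorUnitary : Matrix s s ℂ) with hV
  have hVs : Vᴴ * V = 1 := by
    rw [← Matrix.star_eq_conjTranspose]; exact Unitary.coe_star_mul_self _
  have hVs' : V * Vᴴ = 1 := by
    rw [← Matrix.star_eq_conjTranspose]; exact Unitary.coe_mul_star_self _
  set lam : s → ℝ := hHerm.eigenvalues with hlam
  have hdec : (1 : Matrix s s ℂ) - H =
      V * Matrix.diagonal (fun i => ((1 - lam i : ℝ) : ℂ)) * Vᴴ := by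
    have hd : Matrix.diagonal (fun i => ((1 - lam i : ℝ) : ℂ)) =
        1 - Matrix.diagonal (RCLike.ofReal ∘ lam) := by
      rw [← Matrix.diagonal_one, Matrix.diagonal_sub]
      congr 1
      funext i
      simp [Function.comp]
    rw [hd, Matrix.mul_sub, Matrix.mul_one, Matrix.sub_mul, hVs']
    congr 1
    conv_lhs => rw [hHerm.spectral_theorem]
    rw [Unitary.conjStarAlgAut_apply, Matrix.star_eq_conjTranspose]
  rw [hdec, norm_conj hVs, norm_diagonal]
  obtain ⟨j, -, hj⟩ := Finset.exists_min_image Finset.univ lam ⟨Classical.arbitrary s,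
    Finset.mem_univ _⟩
  have hj' : ∀ i, lam j ≤ lam i := fun i => hj i (Finset.mem_univ i)
  have hle1 : ∀ i, lam i ≤ 1 := fun i => eigenvalues_le_one hHerm h1 i
  have hnorm : ∀ i, ‖((1 - lam i : ℝ) : ℂ)‖ = 1 - lam i := by
    intro i
    rw [Complex.norm_real, Real.norm_eq_abs, abs_of_nonneg (by linarith [hle1 i])]
  have hsup : (⨆ i, ‖((1 - lam i : ℝ) : ℂ)‖) = 1 - lam j := by
    refine le_antisymm (ciSup_le fun i => ?_) ?_
    · rw [hnorm i]; linarith [hj' i]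
    · rw [← hnorm j]
      exact le_ciSup (f := fun i => ‖((1 - lam i : ℝ) : ℂ)‖)
        (Set.Finite.bddAbove (Set.finite_range _)) j
  have hinf : (⨅ i, lam i) = lam j :=
    le_antisymm (ciInf_le (Set.Finite.bddBelow (Set.finite_range _)) j) (le_ciInf hj')
  rw [hsup, hinf]

/-- norm of a PSD contraction -/
lemma norm_psd_le_one [Nonempty s] {H : Matrix s s ℂ} (hH : H.PosSemidef)
    (h1 : (1 - H).PosSemidef) : ‖H‖ ≤ 1 := by
  set V : Matrix s s ℂ := (hH.1.eigenvectorUnitary : Matrix s s ℂ) with hV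
  have hVs : Vᴴ * V = 1 := by
    rw [← Matrix.star_eq_conjTranspose]; exact Unitary.coe_star_mul_self _
  have hdec := hH.1.spectral_theorem
  rw [Unitary.conjStarAlgAut_apply, Matrix.star_eq_conjTranspose] at hdec
  rw [hdec, norm_conj hVs, norm_diagonal]
  refine ciSup_le fun i => ?_
  have h0 := hH.eigenvalues_nonneg i
  have h2 := eigenvalues_le_one hH.1 h1 i
  simp only [Function.comp_apply, RCLike.norm_ofReal]
  rw [abs_of_nonneg h0]
  exact h2

lemma norm_contraction_le_one [Nonempty s] {M : Matrix n s ℂ}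
    (h1 : (1 - Mᴴ * M).PosSemidef) : ‖M‖ ≤ 1 := by
  have h := norm_psd_le_one (Matrix.posSemidef_conjTranspose_mul_self M) h1
  have h2 : ‖M‖ * ‖M‖ = ‖Mᴴ * M‖ := (Matrix.l2_opNorm_conjTranspose_mul_self M).symm
  nlinarith [norm_nonneg M]

/-- min eigenvalues of CᴴC and CCᴴ agree -/
lemma iInf_eig_comm [Nonempty s] (C : Matrix s s ℂ) :
    ⨅ i, (Matrix.isHermitian_conjTranspose_mul_self C).eigenvalues i =
      ⨅ i, (Matrix.isHermitian_mul_conjTranspose_self C).eigenvalues i := by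
  have hsp : spectrum ℝ (Cᴴ * C) = spectrum ℝ (C * Cᴴ) := by
    ext r
    rcases eq_or_ne r 0 with rfl | hr
    · simp only [spectrum.zero_mem_iff, Matrix.isUnit_iff_isUnit_det, Matrix.det_mul]
      rw [mul_comm]
    · exact spectrum.unit_mem_mul_comm (r := Units.mk0 r hr)
  unfold iInf
  rw [← (Matrix.isHermitian_conjTranspose_mul_self C).spectrum_real_eq_range_eigenvalues,
    ← (Matrix.isHermitian_mul_conjTranspose_self C).spectrum_real_eq_range_eigenvalues, hsp]

lemma inner_mulVec_eq_zero {M N : Matrix n n ℂ} (h : Mᴴ * N = 0) (x y : n → ℂ) :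
    (inner ℂ ((WithLp.equiv 2 (n → ℂ)).symm (M *ᵥ x))
      ((WithLp.equiv 2 (n → ℂ)).symm (N *ᵥ y)) : ℂ) = 0 := by
  rw [WithLp.equiv_symm_apply, EuclideanSpace.inner_toLp_toLp, dotProduct_comm, Matrix.star_mulVec, Matrix.dotProduct_mulVec,
    Matrix.vecMul_vecMul, h, Matrix.vecMul_zero, zero_dotProduct]

lemma pythagoras {u v : EuclideanSpace ℂ n} (h : (inner ℂ u v : ℂ) = 0) :
    ‖u - v‖ ^ 2 = ‖u‖ ^ 2 + ‖v‖ ^ 2 := by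
  rw [norm_sub_sq (𝕜 := ℂ), h]
  simp

lemma pythagoras_add {u v : EuclideanSpace ℂ n} (h : (inner ℂ u v : ℂ) = 0) :
    ‖u + v‖ ^ 2 = ‖u‖ ^ 2 + ‖v‖ ^ 2 := by
  rw [norm_add_sq (𝕜 := ℂ), h]
  simp

lemma norm_sub_proj_le {P Q : Matrix n n ℂ} (hP : Pᴴ = P) (hP2 : P * P = P)
    (hQ : Qᴴ = Q) (hQ2 : Q * Q = Q) :
    ‖P - Q‖ ≤ max ‖P * (1 - Q)‖ ‖(1 - P) * Q‖ := by
  set a := ‖P * (1 - Q)‖ with ha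
  set b := ‖(1 - P) * Q‖ with hb
  set e := (WithLp.equiv 2 (n → ℂ)).symm with he
  refine norm_le_bound _ _ (le_max_of_le_left (norm_nonneg _)) fun x => ?_
  have hsplit : (P - Q) *ᵥ x = (P * (1 - Q)) *ᵥ x - ((1 - P) * Q) *ᵥ x := by
    rw [← Matrix.sub_mulVec]
    congr 1
    noncomm_ring
  have horth1 : (P * (1 - Q))ᴴ * ((1 - P) * Q) = 0 := by
    have h1 : Pᴴ * (1 - P) = 0 := by
      rw [hP, Matrix.mul_sub, Matrix.mul_one, hP2, sub_self]
    calc (P * (1 - Q))ᴴ * ((1 - P) * Q) = (1 - Q)ᴴ * ((Pᴴ * (1 - P)) * Q) := by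
          rw [Matrix.conjTranspose_mul]
          noncomm_ring
      _ = 0 := by rw [h1, Matrix.zero_mul, Matrix.mul_zero]
  have horth2 : (1 - Q)ᴴ * Q = 0 := by
    rw [Matrix.conjTranspose_sub, Matrix.conjTranspose_one, hQ, Matrix.sub_mul,
      Matrix.one_mul, hQ2, sub_self]
  have hx : e ((P - Q) *ᵥ x) = e ((P * (1 - Q)) *ᵥ x) - e (((1 - P) * Q) *ᵥ x) := by
    rw [hsplit, he, WithLp.equiv_symm_apply, WithLp.toLp_sub]
  have hxx : e x = e ((1 - Q) *ᵥ x) + e (Q *ᵥ x) := by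
    rw [he, WithLp.equiv_symm_apply, ← WithLp.toLp_add, ← Matrix.add_mulVec]
    congr 1
    rw [sub_add_cancel, Matrix.one_mulVec]
  have hpyth1 : ‖e ((P - Q) *ᵥ x)‖ ^ 2 =
      ‖e ((P * (1 - Q)) *ᵥ x)‖ ^ 2 + ‖e (((1 - P) * Q) *ᵥ x)‖ ^ 2 := by
    rw [hx]
    exact pythagoras (inner_mulVec_eq_zero horth1 x x)
  have hpythx : ‖e x‖ ^ 2 = ‖e ((1 - Q) *ᵥ x)‖ ^ 2 + ‖e (Q *ᵥ x)‖ ^ 2 := by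
    rw [hxx]
    exact pythagoras_add (inner_mulVec_eq_zero horth2 x x)
  have hu : ‖e ((P * (1 - Q)) *ᵥ x)‖ ≤ a * ‖e ((1 - Q) *ᵥ x)‖ := by
    have hm : P * (1 - Q) = P * (1 - Q) * (1 - Q) := by
      have : (1 - Q) * (1 - Q) = 1 - Q := by noncomm_ring [hQ2]
      rw [Matrix.mul_assoc, this]
    have h1 : (P * (1 - Q)) *ᵥ x = (P * (1 - Q)) *ᵥ ((1 - Q) *ᵥ x) := by
      rw [Matrix.mulVec_mulVec, ← hm]
    rw [h1]
    exact mulVec_norm_le _ _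
  have hv : ‖e (((1 - P) * Q) *ᵥ x)‖ ≤ b * ‖e (Q *ᵥ x)‖ := by
    have hm : (1 - P) * Q = (1 - P) * Q * Q := by
      rw [Matrix.mul_assoc, hQ2]
    have h1 : ((1 - P) * Q) *ᵥ x = ((1 - P) * Q) *ᵥ (Q *ᵥ x) := by
      rw [Matrix.mulVec_mulVec, ← hm]
    rw [h1]
    exact mulVec_norm_le _ _
  have hsq : ‖e ((P - Q) *ᵥ x)‖ ^ 2 ≤ (max a b * ‖e x‖) ^ 2 := by
    rw [hpyth1, mul_pow, hpythx, mul_add]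
    have h1 : ‖e ((P * (1 - Q)) *ᵥ x)‖ ^ 2 ≤ a ^ 2 * ‖e ((1 - Q) *ᵥ x)‖ ^ 2 := by
      rw [← mul_pow]
      exact pow_le_pow_left₀ (norm_nonneg _) hu 2
    have h2 : ‖e (((1 - P) * Q) *ᵥ x)‖ ^ 2 ≤ b ^ 2 * ‖e (Q *ᵥ x)‖ ^ 2 := by
      rw [← mul_pow]
      exact pow_le_pow_left₀ (norm_nonneg _) hv 2
    have h3 : a ^ 2 ≤ (max a b) ^ 2 :=
      pow_le_pow_left₀ (norm_nonneg _) (le_max_left a b) 2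
    have h4 : b ^ 2 ≤ (max a b) ^ 2 :=
      pow_le_pow_left₀ (norm_nonneg _) (le_max_right a b) 2
    nlinarith [sq_nonneg ‖e ((1 - Q) *ᵥ x)‖, sq_nonneg ‖e (Q *ᵥ x)‖]
  exact le_of_pow_le_pow_left₀ two_ne_zero
    (by positivity : (0:ℝ) ≤ max a b * ‖e x‖) hsq

lemma isUnit_of_rank_eq {k : ℕ} (H : Matrix (Fin k) (Fin k) ℂ) (h : H.rank = k) :
    IsUnit H := by
  rw [← Matrix.mulVec_surjective_iff_isUnit]
  have htop : LinearMap.range H.mulVecLin = ⊤ := by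
    apply Submodule.eq_top_of_finrank_eq
    rw [show Module.finrank ℂ (LinearMap.range H.mulVecLin) = H.rank from rfl, h]
    simp
  exact LinearMap.range_eq_top.mp htop

lemma polar_facts {m s : ℕ} (M : Matrix (Fin m) (Fin s) ℂ) (hr : M.rank = s) :
    (M * ((Matrix.posSemidef_conjTranspose_mul_self M).sqrt)⁻¹)ᴴ *
      (M * ((Matrix.posSemidef_conjTranspose_mul_self M).sqrt)⁻¹) = 1 ∧
    (M * ((Matrix.posSemidef_conjTranspose_mul_self M).sqrt)⁻¹) *
      (M * ((Matrix.posSemidef_conjTranspose_mul_self M).sqrt)⁻¹)ᴴ =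
      M * ((Mᴴ * M)⁻¹ * Mᴴ) ∧
    IsUnit (Mᴴ * M).det := by
  set S := (Matrix.posSemidef_conjTranspose_mul_self M).sqrt with hS
  have hSS : S * S = Mᴴ * M := psd_sqrt_mul_self (Matrix.posSemidef_conjTranspose_mul_self M)
  have hUnit : IsUnit (Mᴴ * M) := by
    apply isUnit_of_rank_eq
    rw [Matrix.rank_conjTranspose_mul_self, hr]
  have hdetMM : IsUnit (Mᴴ * M).det := (Matrix.isUnit_iff_isUnit_det _).mp hUnit
  have hdetS : IsUnit S.det := by
    have : IsUnit (S.det * S.det) := by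
      rw [← Matrix.det_mul, hSS]
      exact hdetMM
    exact isUnit_of_mul_isUnit_left this
  have hSH : Sᴴ = S := psd_sqrt_herm (Matrix.posSemidef_conjTranspose_mul_self M)
  have hSinv : (S⁻¹)ᴴ = S⁻¹ := by
    rw [Matrix.conjTranspose_nonsing_inv, hSH]
  refine ⟨?_, ?_, hdetMM⟩
  · rw [Matrix.conjTranspose_mul, hSinv]
    calc S⁻¹ * Mᴴ * (M * S⁻¹) = S⁻¹ * (Mᴴ * M) * S⁻¹ := by
          rw [Matrix.mul_assoc, Matrix.mul_assoc, Matrix.mul_assoc]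
      _ = S⁻¹ * (S * S) * S⁻¹ := by rw [hSS]
      _ = (S⁻¹ * S) * (S * S⁻¹) := by
          rw [Matrix.mul_assoc, Matrix.mul_assoc, Matrix.mul_assoc]
      _ = 1 := by rw [Matrix.nonsing_inv_mul S hdetS, Matrix.mul_nonsing_inv S hdetS,
          Matrix.one_mul]
  · rw [Matrix.conjTranspose_mul, hSinv]
    have hinv : (Mᴴ * M)⁻¹ = S⁻¹ * S⁻¹ := by
      rw [← hSS, Matrix.mul_inv_rev]
    rw [hinv]
    rw [Matrix.mul_assoc M S⁻¹ (S⁻¹ * Mᴴ), ← Matrix.mul_assoc S⁻¹ S⁻¹ Mᴴ,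
      ← Matrix.mul_assoc M (S⁻¹ * S⁻¹) Mᴴ]

lemma sub_psd_of_delete {m s : ℕ} (U : Matrix (Fin (m+1)) (Fin s) ℂ) (hU : Uᴴ * U = 1)
    (f : Fin m → Fin (m+1)) (i0 : Fin (m+1))
    (hsum : ∀ g : Fin (m+1) → ℂ, ∑ i, g i = g i0 + ∑ i, g (f i)) :
    (1 - (U.submatrix f id)ᴴ * (U.submatrix f id)).PosSemidef := by
  set y : Matrix (Fin 1) (Fin s) ℂ := Matrix.of (fun _ j => U i0 j) with hy
  have h : (1 : Matrix (Fin s) (Fin s) ℂ) - (U.submatrix f id)ᴴ * (U.submatrix f id) =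
      yᴴ * y := by
    rw [← hU]
    ext j k
    simp only [Matrix.sub_apply, Matrix.mul_apply, Matrix.conjTranspose_apply,
      Matrix.submatrix_apply, id, Matrix.of_apply, hy]
    rw [hsum (fun i => star (U i j) * U i k)]
    simp
  rw [h]
  exact Matrix.posSemidef_conjTranspose_mul_self y


lemma sandwich {A B : Matrix n s ℂ} (hA : Aᴴ * A = 1) :
    Aᴴ * (1 - B * Bᴴ) * A = 1 - (Aᴴ * B) * (Aᴴ * B)ᴴ := by
  rw [Matrix.conjTranspose_mul Aᴴ B, Matrix.conjTranspose_conjTranspose,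
    Matrix.mul_sub, Matrix.mul_one, Matrix.sub_mul, hA]
  congr 1
  rw [← Matrix.mul_assoc Aᴴ B Bᴴ, Matrix.mul_assoc (Aᴴ * B) Bᴴ A]

lemma proj_sandwich (B : Matrix n s ℂ) (X : Matrix n n ℂ) :
    (B * Bᴴ) * X * (B * Bᴴ) = B * (Bᴴ * X * B) * Bᴴ := by
  rw [Matrix.mul_assoc B Bᴴ X, Matrix.mul_assoc B (Bᴴ * X) (B * Bᴴ),
    ← Matrix.mul_assoc (Bᴴ * X) B Bᴴ, ← Matrix.mul_assoc B (Bᴴ * X * B) Bᴴ]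

end EsterAux


section Main

open Matrix EsterAux

/-- Let `U` be an `(m+1) × s` complex matrix with orthonormal columns
(`s ≤ m`), let `Uf` (resp. `Ul`) be obtained from `U` by deleting its first (resp. last)
row, both of full column rank `s`.  With `E = Uf − Ul Ul† Uf` (for a full-column-rank
matrix `A` the Moore–Penrose pseudo-inverse is `A† = (AᴴA)⁻¹Aᴴ`), `P_f = Uf Uf†`,
`P_l = Ul Ul†` the orthogonal projections onto the column spaces, we have
`‖E‖₂ ≤ ‖P_f − P_l‖₂` and `‖P_f − P_l‖₂ = sin θ₁ = √(1 − σ_min(ÂᴴB̂)²)`, where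
`Â = Uf (UfᴴUf)^{-1/2}` and `B̂ = Ul (UlᴴUl)^{-1/2}` are the orthonormal polar factors
and `θ₁` is the largest principal angle between the column spaces of `Uf` and `Ul`. -/
theorem ester_norm_le_gap (m s : ℕ) (hs : 0 < s) (hsm : s ≤ m)
    (U : Matrix (Fin (m + 1)) (Fin s) ℂ) (hU : Uᴴ * U = 1)
    (Uf Ul : Matrix (Fin m) (Fin s) ℂ)
    (hUf : Uf = U.submatrix Fin.succ id) (hUl : Ul = U.submatrix Fin.castSucc id)
    (hrf : Uf.rank = s) (hrl : Ul.rank = s) :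
    specNorm (Uf - Ul * ((Ulᴴ * Ul)⁻¹ * Ulᴴ * Uf)) ≤
        specNorm (Uf * ((Ufᴴ * Uf)⁻¹ * Ufᴴ) - Ul * ((Ulᴴ * Ul)⁻¹ * Ulᴴ)) ∧
      specNorm (Uf * ((Ufᴴ * Uf)⁻¹ * Ufᴴ) - Ul * ((Ulᴴ * Ul)⁻¹ * Ulᴴ)) =
        Real.sqrt (1 - (⨅ i, singularValues
          ((Uf * ((Matrix.posSemidef_conjTranspose_mul_self Uf).sqrt)⁻¹)ᴴ *
            (Ul * ((Matrix.posSemidef_conjTranspose_mul_self Ul).sqrt)⁻¹)) i) ^ 2) := by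
  have hne : Nonempty (Fin s) := Fin.pos_iff_nonempty.mp hs
  obtain ⟨hA1, hA2, hdetf⟩ := polar_facts Uf hrf
  obtain ⟨hB1, hB2, hdetl⟩ := polar_facts Ul hrl
  set A := Uf * ((Matrix.posSemidef_conjTranspose_mul_self Uf).sqrt)⁻¹ with hAdef
  set B := Ul * ((Matrix.posSemidef_conjTranspose_mul_self Ul).sqrt)⁻¹ with hBdef
  set P := A * Aᴴ with hPdef
  set Q := B * Bᴴ with hQdef
  set C := Aᴴ * B with hCdef
  -- projection properties
  have hPH : Pᴴ = P := by
    rw [hPdef, Matrix.conjTranspose_mul, Matrix.conjTranspose_conjTranspose]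
  have hQH : Qᴴ = Q := by
    rw [hQdef, Matrix.conjTranspose_mul, Matrix.conjTranspose_conjTranspose]
  have hPP : P * P = P := by
    rw [hPdef, Matrix.mul_assoc, ← Matrix.mul_assoc Aᴴ A Aᴴ, hA1, Matrix.one_mul]
  have hQQ : Q * Q = Q := by
    rw [hQdef, Matrix.mul_assoc, ← Matrix.mul_assoc Bᴴ B Bᴴ, hB1, Matrix.one_mul]
  have hPg : Uf * ((Ufᴴ * Uf)⁻¹ * Ufᴴ) = P := hA2.symm
  have hQg : Ul * ((Ulᴴ * Ul)⁻¹ * Ulᴴ) = Q := hB2.symm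
  have h1P : (1 - P)ᴴ = 1 - P := by
    rw [Matrix.conjTranspose_sub, Matrix.conjTranspose_one, hPH]
  have h1Q : (1 - Q)ᴴ = 1 - Q := by
    rw [Matrix.conjTranspose_sub, Matrix.conjTranspose_one, hQH]
  have h1PP : (1 - P) * (1 - P) = 1 - P := by noncomm_ring [hPP]
  have h1QQ : (1 - Q) * (1 - Q) = 1 - Q := by noncomm_ring [hQQ]
  -- norms
  have hnA : ‖A‖ ≤ 1 := norm_isometry_le_one hA1
  have hnB : ‖B‖ ≤ 1 := norm_isometry_le_one hB1
  have hnUf : ‖Uf‖ ≤ 1 := by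
    apply norm_contraction_le_one
    rw [hUf]
    refine sub_psd_of_delete U hU Fin.succ 0 fun g => ?_
    rw [Fin.sum_univ_succ]
  have hnQ : ‖Q‖ ≤ 1 := by
    calc ‖Q‖ ≤ ‖B‖ * ‖Bᴴ‖ := Matrix.l2_opNorm_mul _ _
      _ ≤ 1 * 1 := by
        rw [Matrix.l2_opNorm_conjTranspose]
        exact mul_le_mul hnB hnB (norm_nonneg _) zero_le_one
      _ = 1 := by ring
  -- Part 1
  have hPUf : P * Uf = Uf := by
    rw [← hPg, Matrix.mul_assoc, Matrix.mul_assoc (Ufᴴ * Uf)⁻¹ Ufᴴ Uf,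
      Matrix.nonsing_inv_mul (Ufᴴ * Uf) hdetf, Matrix.mul_one]
  have hE : Uf - Ul * ((Ulᴴ * Ul)⁻¹ * Ulᴴ * Uf) = (P - Q) * Uf := by
    rw [Matrix.sub_mul, hPUf]
    congr 1
    rw [← hQg, Matrix.mul_assoc Ul ((Ulᴴ * Ul)⁻¹ * Ulᴴ) Uf,
      Matrix.mul_assoc (Ulᴴ * Ul)⁻¹ Ulᴴ Uf]
  constructor
  · show ‖Uf - Ul * ((Ulᴴ * Ul)⁻¹ * Ulᴴ * Uf)‖ ≤
      ‖Uf * ((Ufᴴ * Uf)⁻¹ * Ufᴴ) - Ul * ((Ulᴴ * Ul)⁻¹ * Ulᴴ)‖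
    rw [hE, hPg, hQg]
    calc ‖(P - Q) * Uf‖ ≤ ‖P - Q‖ * ‖Uf‖ := Matrix.l2_opNorm_mul _ _
      _ ≤ ‖P - Q‖ * 1 := by gcongr
      _ = ‖P - Q‖ := by ring
  · show ‖Uf * ((Ufᴴ * Uf)⁻¹ * Ufᴴ) - Ul * ((Ulᴴ * Ul)⁻¹ * Ulᴴ)‖ = _
    rw [hPg, hQg]
    -- key sandwich identities
    have key1 : Aᴴ * (1 - Q) * A = 1 - C * Cᴴ := by
      rw [hQdef, hCdef]
      exact sandwich hA1
    have key2 : Bᴴ * (1 - P) * B = 1 - Cᴴ * C := by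
      have h := sandwich (B := A) hB1
      rw [hPdef, hCdef]
      rw [Matrix.conjTranspose_mul Aᴴ B, Matrix.conjTranspose_conjTranspose]
      rw [h]
      congr 1
      rw [Matrix.conjTranspose_mul Bᴴ A, Matrix.conjTranspose_conjTranspose]
    have hCCH : (1 : Matrix (Fin s) (Fin s) ℂ) - C * Cᴴ = ((1 - Q) * A)ᴴ * ((1 - Q) * A) := by
      rw [Matrix.conjTranspose_mul (1 - Q) A, h1Q, Matrix.mul_assoc Aᴴ (1 - Q) ((1 - Q) * A),
        ← Matrix.mul_assoc (1 - Q) (1 - Q) A, h1QQ, ← Matrix.mul_assoc Aᴴ (1 - Q) A, key1]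
    have hCHC : (1 : Matrix (Fin s) (Fin s) ℂ) - Cᴴ * C = ((1 - P) * B)ᴴ * ((1 - P) * B) := by
      rw [Matrix.conjTranspose_mul (1 - P) B, h1P, Matrix.mul_assoc Bᴴ (1 - P) ((1 - P) * B),
        ← Matrix.mul_assoc (1 - P) (1 - P) B, h1PP, ← Matrix.mul_assoc Bᴴ (1 - P) B, key2]
    have hpsd1 : ((1 : Matrix (Fin s) (Fin s) ℂ) - C * Cᴴ).PosSemidef := by
      rw [hCCH]; exact Matrix.posSemidef_conjTranspose_mul_self _
    have hpsd2 : ((1 : Matrix (Fin s) (Fin s) ℂ) - Cᴴ * C).PosSemidef := by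
      rw [hCHC]; exact Matrix.posSemidef_conjTranspose_mul_self _
    set lmin := ⨅ i, (Matrix.isHermitian_conjTranspose_mul_self C).eigenvalues i with hlmin
    have hb2 : ‖(1 - P) * Q‖ ^ 2 = 1 - lmin := by
      have hXX : ((1 - P) * Q)ᴴ * ((1 - P) * Q) = B * (1 - Cᴴ * C) * Bᴴ := by
        rw [Matrix.conjTranspose_mul (1 - P) Q, h1P, hQH,
          Matrix.mul_assoc Q (1 - P) ((1 - P) * Q), ← Matrix.mul_assoc (1 - P) (1 - P) Q,
          h1PP, ← Matrix.mul_assoc Q (1 - P) Q, hQdef, proj_sandwich, key2]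
      have hns := Matrix.l2_opNorm_conjTranspose_mul_self ((1 - P) * Q)
      rw [hXX, norm_conj hB1] at hns
      rw [sq, ← hns, norm_one_sub_psd (Matrix.isHermitian_conjTranspose_mul_self C) hpsd2, hlmin]
    have ha2 : ‖P * (1 - Q)‖ ^ 2 = 1 - lmin := by
      have hconv : ‖P * (1 - Q)‖ = ‖(1 - Q) * P‖ := by
        rw [← Matrix.l2_opNorm_conjTranspose ((1 - Q) * P),
          Matrix.conjTranspose_mul (1 - Q) P, h1Q, hPH]
      have hXX : ((1 - Q) * P)ᴴ * ((1 - Q) * P) = A * (1 - C * Cᴴ) * Aᴴ := by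
        rw [Matrix.conjTranspose_mul (1 - Q) P, h1Q, hPH,
          Matrix.mul_assoc P (1 - Q) ((1 - Q) * P), ← Matrix.mul_assoc (1 - Q) (1 - Q) P,
          h1QQ, ← Matrix.mul_assoc P (1 - Q) P, hPdef, proj_sandwich, key1]
      have hns := Matrix.l2_opNorm_conjTranspose_mul_self ((1 - Q) * P)
      rw [hXX, norm_conj hA1] at hns
      rw [hconv, sq, ← hns,
        norm_one_sub_psd (Matrix.isHermitian_mul_conjTranspose_self C) hpsd1, hlmin,
        iInf_eig_comm]
    have hbv : ‖(1 - P) * Q‖ = Real.sqrt (1 - lmin) := by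
      rw [← hb2, Real.sqrt_sq (norm_nonneg _)]
    have hav : ‖P * (1 - Q)‖ = Real.sqrt (1 - lmin) := by
      rw [← ha2, Real.sqrt_sq (norm_nonneg _)]
    have hsv : (1 : ℝ) - (⨅ i, singularValues C i) ^ 2 = 1 - lmin := by
      obtain ⟨j, -, hj⟩ := Finset.exists_min_image Finset.univ
        (fun i => (Matrix.isHermitian_conjTranspose_mul_self C).eigenvalues i)
        ⟨Classical.arbitrary (Fin s), Finset.mem_univ _⟩
      have hj' : ∀ i, (Matrix.isHermitian_conjTranspose_mul_self C).eigenvalues j ≤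
          (Matrix.isHermitian_conjTranspose_mul_self C).eigenvalues i :=
        fun i => hj i (Finset.mem_univ i)
      have hinfe : lmin = (Matrix.isHermitian_conjTranspose_mul_self C).eigenvalues j := by
        rw [hlmin]
        exact le_antisymm (ciInf_le (Set.Finite.bddBelow (Set.finite_range _)) j)
          (le_ciInf hj')
      have hinfs : (⨅ i, singularValues C i) = singularValues C j := by
        refine le_antisymm (ciInf_le (Set.Finite.bddBelow (Set.finite_range _)) j)
          (le_ciInf fun i => ?_)
        exact Real.sqrt_le_sqrt (hj' i)
      rw [hinfs, hinfe]
      congr 1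
      exact Real.sq_sqrt ((Matrix.posSemidef_conjTranspose_mul_self C).eigenvalues_nonneg j)
    rw [hsv]
    refine le_antisymm ?_ ?_
    · have := norm_sub_proj_le hPH hPP hQH hQQ
      rw [hav, hbv, max_self] at this
      exact this
    · rw [← hbv]
      have h1 : (1 - P) * Q = (Q - P) * Q := by noncomm_ring [hQQ]
      calc ‖(1 - P) * Q‖ = ‖(Q - P) * Q‖ := by rw [h1]
        _ ≤ ‖Q - P‖ * ‖Q‖ := Matrix.l2_opNorm_mul _ _
        _ ≤ ‖Q - P‖ * 1 := by gcongr
        _ = ‖P - Q‖ := by rw [mul_one, norm_sub_rev]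


end Main
end

section
/- Let X and Y be n×s complex matrices, each with orthonormal columns, and let c₁ ≥ ⋯ ≥ c_s be the singular values of XᴴY. Then the multiset of squares of the 2s singular values of the augmented n×2s matrix [X Y] is {1 + c_i : i = 1,…,s} ∪ {1 − c_i : i = 1,…,s}. In particular, the s smallest singular values of [X Y], in non-increasing order, are √(1 − c_i) = √2·sin(θ_i/2) for i = 1,…,s, where cos θ_i = c_i. -/
open scoped Matrix Matrix.Norms.L2Operator

section Aux

open Polynomial Matrix Finset

variable {k : Type*} [Fintype k] [DecidableEq k]

lemma aux_eigenvalues_congr {A A' : Matrix k k ℂ} (h : A = A')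
    (hA : A.IsHermitian) (hA' : A'.IsHermitian) :
    hA.eigenvalues = hA'.eigenvalues := by
  subst h; rfl

lemma aux_charmatrix_one :
    charmatrix (1 : Matrix k k ℂ) = ((X : ℂ[X]) - 1) • (1 : Matrix k k ℂ[X]) := by
  ext i j
  by_cases h : i = j
  · subst h
    simp [Matrix.smul_apply, Matrix.one_apply]
  · simp [charmatrix_apply_ne _ _ _ h, Matrix.one_apply_ne h, Matrix.smul_apply]

lemma aux_charpoly_diagonal (d : k → ℂ) :
    (Matrix.diagonal d).charpoly = ∏ i, (X - C (d i)) := by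
  have h : charmatrix (Matrix.diagonal d) = Matrix.diagonal fun i => (X : ℂ[X]) - C (d i) := by
    ext i j
    by_cases h : i = j
    · subst h; simp
    · simp [charmatrix_apply_ne _ _ _ h, Matrix.diagonal_apply_ne _ h, Matrix.diagonal_apply_ne]
  rw [Matrix.charpoly, h, Matrix.det_diagonal]

lemma aux_charpoly_herm {A : Matrix k k ℂ} (hA : A.IsHermitian) :
    A.charpoly = ∏ i, (X - C ((hA.eigenvalues i : ℝ) : ℂ)) := by
  have hU1 : (hA.eigenvectorUnitary : Matrix k k ℂ) *
      star (hA.eigenvectorUnitary : Matrix k k ℂ) = 1 :=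
    Matrix.mem_unitaryGroup_iff.mp hA.eigenvectorUnitary.2
  set U : Matrix k k ℂ := (hA.eigenvectorUnitary : Matrix k k ℂ) with hUdef
  set D : Matrix k k ℂ := Matrix.diagonal (RCLike.ofReal ∘ hA.eigenvalues) with hDdef
  have hsp : A = U * D * star U := hA.spectral_theorem
  have hmap1 : (1 : Matrix k k ℂ).map (C : ℂ →+* ℂ[X]) = 1 :=
    Matrix.map_one _ (map_zero C) (map_one C)
  have hdetU : (U.map (C : ℂ →+* ℂ[X])).det * ((star U).map (C : ℂ →+* ℂ[X])).det = 1 := by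
    rw [← Matrix.det_mul, ← Matrix.map_mul, hU1, hmap1, Matrix.det_one]
  have hscalar : U.map (C : ℂ →+* ℂ[X]) * Matrix.scalar k (X : ℂ[X]) *
      (star U).map (C : ℂ →+* ℂ[X]) = Matrix.scalar k (X : ℂ[X]) := by
    rw [mul_assoc, (Matrix.scalar_commute (X : ℂ[X]) (fun r' => Commute.all _ _)
      ((star U).map (C : ℂ →+* ℂ[X]))).eq]
    rw [← mul_assoc, ← Matrix.map_mul, hU1, hmap1, one_mul]
  have key : charmatrix A =
      U.map (C : ℂ →+* ℂ[X]) * charmatrix D * (star U).map (C : ℂ →+* ℂ[X]) := by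
    have : charmatrix A = Matrix.scalar k (X : ℂ[X]) - (U * D * star U).map (C : ℂ →+* ℂ[X]) := by
      rw [← hsp]; rfl
    rw [this, Matrix.map_mul, Matrix.map_mul]
    have hcm : charmatrix D = Matrix.scalar k (X : ℂ[X]) - D.map (C : ℂ →+* ℂ[X]) := rfl
    rw [hcm, Matrix.mul_sub, Matrix.sub_mul, hscalar]
  have : A.charpoly = (U.map (C : ℂ →+* ℂ[X])).det * (charmatrix D).det *
      ((star U).map (C : ℂ →+* ℂ[X])).det := by
    rw [Matrix.charpoly, key, Matrix.det_mul, Matrix.det_mul]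
  rw [this, mul_comm _ ((charmatrix D).det), mul_assoc, hdetU, mul_one]
  have : (charmatrix D).det = D.charpoly := rfl
  rw [this, hDdef, aux_charpoly_diagonal]
  rfl

lemma aux_det_block (P Q : Matrix k k ℂ[X]) (d : ℂ[X]) (hd : d ≠ 0) :
    (Matrix.fromBlocks (d • 1) (-P) (-Q) (d • 1)).det =
      ((d * d) • (1 : Matrix k k ℂ[X]) - Q * P).det := by
  have hmul : Matrix.fromBlocks (1 : Matrix k k ℂ[X]) 0 Q (d • 1) *
      Matrix.fromBlocks (d • 1) (-P) (-Q) (d • 1) =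
      Matrix.fromBlocks (d • 1) (-P) 0 ((d * d) • 1 - Q * P) := by
    rw [Matrix.fromBlocks_multiply]
    simp only [Matrix.one_mul, Matrix.zero_mul, Matrix.mul_zero, add_zero, zero_add,
      Matrix.mul_neg, Matrix.neg_mul, neg_zero, smul_mul_assoc, mul_smul_comm, one_mul,
      mul_one, smul_smul, add_neg_cancel, neg_add_eq_sub, smul_zero, zero_sub, smul_neg]
  have h1 := congrArg Matrix.det hmul
  rw [Matrix.det_mul, Matrix.det_fromBlocks_zero₁₂, Matrix.det_fromBlocks_zero₂₁,
    Matrix.det_one, one_mul] at h1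
  have hdd : (d • (1 : Matrix k k ℂ[X])).det ≠ 0 := by
    rw [Matrix.det_smul, Matrix.det_one, mul_one]
    exact pow_ne_zero _ hd
  exact mul_left_cancel₀ hdd h1

end Aux

open Polynomial

/-- For `n × s` complex matrices `X`, `Y` with orthonormal columns and
`c i = σᵢ(XᴴY)` the singular values of `XᴴY`, the multiset of squares of the `2s`
singular values of the augmented matrix `[X Y]` is `{1 + cᵢ} ∪ {1 − cᵢ}`. -/
theorem sq_singularValues_augmented (n s : ℕ)
    (X Y : Matrix (Fin n) (Fin s) ℂ) (hX : Xᴴ * X = 1) (hY : Yᴴ * Y = 1) :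
    Multiset.map (fun j : Fin s ⊕ Fin s => singularValues (Matrix.fromCols X Y) j ^ 2)
        Finset.univ.val =
      Multiset.map (fun i : Fin s => 1 + singularValues (Xᴴ * Y) i) Finset.univ.val +
        Multiset.map (fun i : Fin s => 1 - singularValues (Xᴴ * Y) i) Finset.univ.val := by
  classical
  set B : Matrix (Fin s) (Fin s) ℂ := Xᴴ * Y with hB
  set c : Fin s → ℝ := singularValues B with hc
  set N : Matrix (Fin n) (Fin s ⊕ Fin s) ℂ := Matrix.fromCols X Y with hN
  have hBH : Yᴴ * X = Bᴴ := by
    rw [hB, Matrix.conjTranspose_mul, Matrix.conjTranspose_conjTranspose]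
  have h1 : Nᴴ * N = Matrix.fromBlocks 1 B Bᴴ 1 := by
    rw [hN, Matrix.conjTranspose_fromCols_eq_fromRows_conjTranspose,
      Matrix.fromRows_mul_fromCols, hX, hY, hBH, ← hB]
  have hM2 : (Matrix.fromBlocks (1 : Matrix (Fin s) (Fin s) ℂ) B Bᴴ 1).IsHermitian :=
    h1 ▸ Matrix.isHermitian_conjTranspose_mul_self N
  set e : Fin s ⊕ Fin s → ℝ := hM2.eigenvalues with he
  have hEig : (Matrix.isHermitian_conjTranspose_mul_self N).eigenvalues = e :=
    aux_eigenvalues_congr h1 _ _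
  have hKh : (Bᴴ * B).IsHermitian := Matrix.isHermitian_conjTranspose_mul_self B
  set μ : Fin s → ℝ := hKh.eigenvalues with hμ
  have hc' : ∀ i, c i = Real.sqrt (μ i) := fun i => rfl
  have hμ0 : ∀ i, 0 ≤ μ i := fun i => Matrix.eigenvalues_conjTranspose_mul_self_nonneg B i
  -- charpoly of the block matrix
  have hd0 : ((Polynomial.X : ℂ[X]) - 1) ≠ 0 := fun h => by
    simpa using congrArg (Polynomial.eval 0) h
  have hch : Matrix.charmatrix (Matrix.fromBlocks (1 : Matrix (Fin s) (Fin s) ℂ) B Bᴴ 1) =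
      Matrix.fromBlocks (((Polynomial.X : ℂ[X]) - 1) • 1) (-(B.map Polynomial.C))
        (-(Bᴴ.map Polynomial.C)) (((Polynomial.X : ℂ[X]) - 1) • 1) := by
    rw [Matrix.charmatrix_fromBlocks, aux_charmatrix_one]
  have hcp : (Matrix.fromBlocks (1 : Matrix (Fin s) (Fin s) ℂ) B Bᴴ 1).charpoly =
      ((((Polynomial.X : ℂ[X]) - 1) ^ 2) • (1 : Matrix (Fin s) (Fin s) ℂ[X])
        - (Bᴴ * B).map Polynomial.C).det := by
    rw [Matrix.charpoly, hch, aux_det_block _ _ _ hd0, ← Matrix.map_mul, ← pow_two]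
  set φ : ℂ[X] →+* ℂ[X] :=
    Polynomial.eval₂RingHom Polynomial.C (((Polynomial.X : ℂ[X]) - 1) ^ 2) with hφ
  have hmapφ : (Matrix.charmatrix (Bᴴ * B)).map φ =
      ((((Polynomial.X : ℂ[X]) - 1) ^ 2) • (1 : Matrix (Fin s) (Fin s) ℂ[X])
        - (Bᴴ * B).map Polynomial.C) := by
    ext i j
    rw [Matrix.map_apply]
    by_cases h : i = j
    · subst h
      rw [Matrix.charmatrix_apply_eq, map_sub, Matrix.sub_apply, Matrix.smul_apply,
        Matrix.one_apply_eq, smul_eq_mul, mul_one, Matrix.map_apply]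
      simp only [hφ, Polynomial.coe_eval₂RingHom, Polynomial.eval₂_X, Polynomial.eval₂_C]
    · rw [Matrix.charmatrix_apply_ne _ _ _ h, map_neg, Matrix.sub_apply, Matrix.smul_apply,
        Matrix.one_apply_ne h, smul_eq_mul, mul_zero, zero_sub, Matrix.map_apply]
      simp only [hφ, Polynomial.coe_eval₂RingHom, Polynomial.eval₂_C]
  have hdet2 : ((((Polynomial.X : ℂ[X]) - 1) ^ 2) • (1 : Matrix (Fin s) (Fin s) ℂ[X])
      - (Bᴴ * B).map Polynomial.C).det = φ ((Bᴴ * B).charpoly) := by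
    rw [← hmapφ]
    exact (RingHom.map_det φ _).symm
  have hfactor : φ ((Bᴴ * B).charpoly) =
      (∏ i, (Polynomial.X - Polynomial.C ((1 + c i : ℝ) : ℂ))) *
        (∏ i, (Polynomial.X - Polynomial.C ((1 - c i : ℝ) : ℂ))) := by
    rw [aux_charpoly_herm hKh, map_prod, ← Finset.prod_mul_distrib]
    refine Finset.prod_congr rfl fun i _ => ?_
    have hsq : ((μ i : ℝ) : ℂ) = ((c i : ℝ) : ℂ) ^ 2 := by
      have h := Real.sq_sqrt (hμ0 i)
      rw [hc' i]
      exact_mod_cast h.symm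
    have h1 : ((1 + c i : ℝ) : ℂ) = 1 + ((c i : ℝ) : ℂ) := by push_cast; ring
    have h2 : ((1 - c i : ℝ) : ℂ) = 1 - ((c i : ℝ) : ℂ) := by push_cast; ring
    simp only [hφ, Polynomial.coe_eval₂RingHom, map_sub, Polynomial.eval₂_X, Polynomial.eval₂_C]
    rw [hsq, h1, h2, map_pow, map_add, map_sub, map_one]
    ring
  have hcpM2' : (∏ j : Fin s ⊕ Fin s, (Polynomial.X - Polynomial.C ((e j : ℝ) : ℂ))) =
      (∏ i, (Polynomial.X - Polynomial.C ((1 + c i : ℝ) : ℂ))) *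
        (∏ i, (Polynomial.X - Polynomial.C ((1 - c i : ℝ) : ℂ))) :=
    (aux_charpoly_herm hM2).symm.trans (hcp.trans (hdet2.trans hfactor))
  have hpoly : ((Multiset.map (fun j : Fin s ⊕ Fin s => ((e j : ℝ) : ℂ)) Finset.univ.val).map
      (fun a => Polynomial.X - Polynomial.C a)).prod =
      (((Multiset.map (fun i : Fin s => ((1 + c i : ℝ) : ℂ)) Finset.univ.val) +
        (Multiset.map (fun i : Fin s => ((1 - c i : ℝ) : ℂ)) Finset.univ.val)).map
        (fun a => Polynomial.X - Polynomial.C a)).prod := by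
    rw [Multiset.map_add, Multiset.prod_add, Multiset.map_map, Multiset.map_map,
      Multiset.map_map]
    simp only [Function.comp]
    rw [← Finset.prod_eq_multiset_prod, ← Finset.prod_eq_multiset_prod,
      ← Finset.prod_eq_multiset_prod]
    exact hcpM2'
  have hroots := congrArg Polynomial.roots hpoly
  rw [Polynomial.roots_multiset_prod_X_sub_C, Polynomial.roots_multiset_prod_X_sub_C] at hroots
  have keyR : Multiset.map e Finset.univ.val =
      Multiset.map (fun i => 1 + c i) Finset.univ.val +
        Multiset.map (fun i => 1 - c i) Finset.univ.val := by
    refine Multiset.map_injective (f := ((↑) : ℝ → ℂ)) Complex.ofReal_injective ?_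
    simpa [Multiset.map_map, Function.comp_def] using hroots
  calc Multiset.map (fun j : Fin s ⊕ Fin s => singularValues N j ^ 2) Finset.univ.val
      = Multiset.map e Finset.univ.val := by
        refine Multiset.map_congr rfl fun j _ => ?_
        show Real.sqrt ((Matrix.isHermitian_conjTranspose_mul_self N).eigenvalues j) ^ 2 = e j
        have h0 : 0 ≤ e j := by
          rw [← hEig]
          exact Matrix.eigenvalues_conjTranspose_mul_self_nonneg N j
        rw [hEig, Real.sq_sqrt h0]
    _ = _ := by rw [keyR]
end

section
/- Let w ∈ ℂ^{m+n−1} and let H_w be the m×n Hankel matrix with entries (H_w)_{ij} = w_{i+j}. Then ‖H_w‖₂ ≤ max_{0 ≤ k ≤ m+n−2} |Σ_{j=0}^{m+n−2} e^{−2πi k j/(m+n−1)} w_j|, i.e., the spectral norm of H_w is bounded by the largest modulus among the entries of the (unnormalized) discrete Fourier transform of w. -/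
open scoped Matrix Matrix.Norms.L2Operator

/-- The `m × n` Hankel matrix associated with a vector `w` of length `m + n - 1`:
its `(i, j)` entry is `w (i + j)`. -/
noncomputable def hankel {m n : ℕ} (w : Fin (m + n - 1) → ℂ) : Matrix (Fin m) (Fin n) ℂ :=
  Matrix.of fun i j => w ⟨(i : ℕ) + (j : ℕ), by have h1 := i.2; have h2 := j.2; omega⟩

noncomputable def dftMat (N : ℕ) : Matrix (Fin N) (Fin N) ℂ :=
  Matrix.of fun i k : Fin N =>
    Complex.exp (2 * (Real.pi : ℂ) * Complex.I / (N : ℂ)) ^ ((i : ℕ) * (k : ℕ))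

noncomputable def dftv {N : ℕ} (w : Fin N → ℂ) : Fin N → ℂ :=
  fun k => ∑ j : Fin N, Complex.exp (-2 * (Real.pi : ℂ) * Complex.I * ((k : ℕ) : ℂ) *
    ((j : ℕ) : ℂ) / ((N : ℕ) : ℂ)) * w j

lemma geomSumFin {N : ℕ} (x : ℂ) (hx : x ^ N = 1) :
    ∑ k : Fin N, x ^ (k : ℕ) = if x = 1 then (N : ℂ) else 0 := by
  rw [Fin.sum_univ_eq_sum_range (fun k => x ^ k)]
  split_ifs with h
  · simp [h]
  · rw [geom_sum_eq h, hx]; simp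

noncomputable def zN (N : ℕ) : ℂ := Complex.exp (2 * (Real.pi : ℂ) * Complex.I / (N : ℂ))

lemma zN_prim {N : ℕ} (hN : 0 < N) : IsPrimitiveRoot (zN N) N :=
  Complex.isPrimitiveRoot_exp N hN.ne'

lemma zN_pow_N {N : ℕ} (hN : 0 < N) : (zN N) ^ N = 1 := (zN_prim hN).pow_eq_one

lemma zN_ne_zero {N : ℕ} : zN N ≠ 0 := Complex.exp_ne_zero _

lemma zN_pow_mod {N : ℕ} (hN : 0 < N) (a : ℕ) : zN N ^ a = zN N ^ (a % N) := by
  conv_lhs => rw [← Nat.div_add_mod a N]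
  rw [pow_add, pow_mul, zN_pow_N hN, one_pow, one_mul]

lemma zN_pow_eq_pow_iff {N : ℕ} (hN : 0 < N) {a b : ℕ} (hb : b < N) :
    zN N ^ a = zN N ^ b ↔ a % N = b := by
  constructor
  · intro h
    rw [zN_pow_mod hN a] at h
    exact (zN_prim hN).pow_inj (Nat.mod_lt _ hN) hb h
  · intro h
    rw [zN_pow_mod hN a, h]

lemma exp_neg_eq {N : ℕ} (k j : ℕ) :
    Complex.exp (-2 * (Real.pi : ℂ) * Complex.I * (k : ℂ) * (j : ℂ) / ((N : ℕ) : ℂ)) =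
      ((zN N) ^ (k * j))⁻¹ := by
  rw [zN, ← Complex.exp_nat_mul, ← Complex.exp_neg]
  congr 1
  push_cast; ring

lemma zN_star {N : ℕ} : star (zN N) = (zN N)⁻¹ := by
  rw [zN, Complex.star_def, ← Complex.exp_conj, ← Complex.exp_neg]
  congr 1
  simp [map_div₀, Complex.conj_ofNat]
  ring

lemma zN_pow_pow_one {N : ℕ} (hN : 0 < N) (a : ℕ) : ((zN N) ^ a) ^ N = 1 := by
  rw [← pow_mul, mul_comm, pow_mul, zN_pow_N hN, one_pow]

lemma circulant_eq {N : ℕ} (hN : 0 < N) (w : Fin N → ℂ) :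
    Matrix.of (fun i j : Fin N => w (i + j)) =
      ((N : ℂ))⁻¹ • (dftMat N * (Matrix.diagonal (dftv w) * dftMat N)) := by
  have hNC : ((N : ℂ)) ≠ 0 := Nat.cast_ne_zero.mpr hN.ne'
  ext i j
  rw [Matrix.smul_apply, Matrix.mul_apply]
  have hentry : ∀ k : Fin N,
      dftMat N i k * (Matrix.diagonal (dftv w) * dftMat N) k j =
        ∑ l : Fin N, ((zN N) ^ ((i : ℕ) + (j : ℕ)) * ((zN N) ^ (l : ℕ))⁻¹) ^ (k : ℕ) * w l := by
    intro k
    rw [Matrix.diagonal_mul, dftv, Finset.sum_mul, Finset.mul_sum]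
    refine Finset.sum_congr rfl fun l _ => ?_
    rw [exp_neg_eq]
    show (zN N) ^ ((i:ℕ) * (k:ℕ)) * (((zN N) ^ ((k:ℕ) * (l:ℕ)))⁻¹ * w l * (zN N) ^ ((k:ℕ) * (j:ℕ))) = _
    have e1 : ((zN N) ^ ((i:ℕ) + (j:ℕ)) * ((zN N) ^ (l:ℕ))⁻¹) ^ (k:ℕ)
        = (zN N) ^ ((i:ℕ)*(k:ℕ)) * (zN N) ^ ((k:ℕ)*(j:ℕ)) * ((zN N) ^ ((k:ℕ)*(l:ℕ)))⁻¹ := by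
      rw [mul_pow, ← pow_mul, ← inv_pow, ← pow_mul, add_mul, pow_add]
      ring_nf
    rw [e1]; ring
  rw [Finset.sum_congr rfl fun k _ => hentry k, Finset.sum_comm]
  have hinner : ∀ l : Fin N,
      ∑ k : Fin N, ((zN N) ^ ((i : ℕ) + (j : ℕ)) * ((zN N) ^ (l : ℕ))⁻¹) ^ (k : ℕ) * w l =
        (if l = i + j then (N : ℂ) else 0) * w l := by
    intro l
    rw [← Finset.sum_mul, geomSumFin]
    · congr 1
      have hcond : ((zN N) ^ ((i : ℕ) + (j : ℕ)) * ((zN N) ^ (l : ℕ))⁻¹ = 1) ↔ (l = i + j) := by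
        rw [mul_inv_eq_one₀ (pow_ne_zero _ zN_ne_zero),
          zN_pow_eq_pow_iff hN l.isLt]
        simp only [Fin.ext_iff, Fin.add_def]
        exact eq_comm
      simp [hcond]
    · rw [mul_pow, zN_pow_pow_one hN, inv_pow, zN_pow_pow_one hN, inv_one, mul_one]
  rw [Finset.sum_congr rfl fun l _ => hinner l]
  simp only [ite_mul, zero_mul]
  rw [Finset.sum_ite_eq' Finset.univ (i + j) (fun l => (N : ℂ) * w l)]
  simp only [Finset.mem_univ, if_true, Matrix.of_apply, smul_eq_mul]
  field_simp

lemma dftMat_herm {N : ℕ} (hN : 0 < N) : (dftMat N)ᴴ * dftMat N = (N : ℂ) • 1 := by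
  ext i j
  rw [Matrix.mul_apply]
  have hentry : ∀ k : Fin N, (dftMat N)ᴴ i k * dftMat N k j
      = ((zN N) ^ ((j:ℕ)) * ((zN N) ^ ((i:ℕ)))⁻¹) ^ (k : ℕ) := by
    intro k
    rw [Matrix.conjTranspose_apply]
    show star ((zN N) ^ ((k:ℕ) * (i:ℕ))) * (zN N) ^ ((k:ℕ) * (j:ℕ)) = _
    rw [star_pow, zN_star, mul_pow, ← pow_mul, ← inv_pow, ← pow_mul]
    ring_nf
  rw [Finset.sum_congr rfl fun k _ => hentry k, geomSumFin]
  · have hcond : ((zN N) ^ ((j:ℕ)) * ((zN N) ^ ((i:ℕ)))⁻¹ = 1) ↔ (i = j) := by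
      rw [mul_inv_eq_one₀ (pow_ne_zero _ zN_ne_zero), zN_pow_eq_pow_iff hN i.isLt,
        Nat.mod_eq_of_lt j.isLt]
      simp only [Fin.ext_iff]
      exact eq_comm
    rw [Matrix.smul_apply, Matrix.one_apply]
    simp [hcond, eq_comm]
  · rw [mul_pow, zN_pow_pow_one hN, inv_pow, zN_pow_pow_one hN, inv_one, mul_one]


lemma l2normDiagLe {N : Type*} [Fintype N] [DecidableEq N] (v : N → ℂ) (c : ℝ)
    (hc : 0 ≤ c) (h : ∀ i, ‖v i‖ ≤ c) : ‖Matrix.diagonal v‖ ≤ c := by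
  rw [Matrix.l2_opNorm_def]
  refine ContinuousLinearMap.opNorm_le_bound _ hc fun x => ?_
  simp only [LinearEquiv.trans_apply, LinearMap.coe_toContinuousLinearMap']
  rw [EuclideanSpace.norm_eq, EuclideanSpace.norm_eq]
  have hterm : ∀ i, ‖(Matrix.toEuclideanLin (Matrix.diagonal v) x) i‖ ^ 2
      ≤ c ^ 2 * ‖x i‖ ^ 2 := by
    intro i
    have : (Matrix.toEuclideanLin (Matrix.diagonal v) x) i = v i * x i := by
      simp [Matrix.toEuclideanLin_apply, Matrix.mulVec_diagonal]
    rw [this, norm_mul, mul_pow]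
    have hv : ‖v i‖ ≤ c := h i
    have h2 : ‖v i‖ ^ 2 ≤ c ^ 2 := by nlinarith [norm_nonneg (v i)]
    exact mul_le_mul_of_nonneg_right h2 (sq_nonneg _)
  calc Real.sqrt (∑ i, ‖(Matrix.toEuclideanLin (Matrix.diagonal v) x) i‖ ^ 2)
      ≤ Real.sqrt (∑ i, c ^ 2 * ‖x i‖ ^ 2) := by
        apply Real.sqrt_le_sqrt (Finset.sum_le_sum fun i _ => hterm i)
    _ = c * Real.sqrt (∑ i, ‖x i‖ ^ 2) := by
        rw [← Finset.mul_sum, Real.sqrt_mul (by positivity), Real.sqrt_sq hc]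


lemma l2normOneLe (I : Type*) [Fintype I] [DecidableEq I] : ‖(1 : Matrix I I ℂ)‖ ≤ 1 := by
  rw [Matrix.cstar_norm_def, map_one]
  exact ContinuousLinearMap.norm_id_le

lemma hankel_aux {N : ℕ} (hN : 0 < N) (w : Fin N → ℂ) {m n : ℕ} (hmN : m ≤ N) (hnN : n ≤ N) :
    ‖(Matrix.of (fun i j : Fin N => w (i + j))).submatrix (Fin.castLE hmN) (Fin.castLE hnN)‖ ≤
      ⨆ k : Fin N, ‖dftv w k‖ := by
  set S : ℝ := ⨆ k : Fin N, ‖dftv w k‖ with hSdef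
  have hSk : ∀ k : Fin N, ‖dftv w k‖ ≤ S :=
    fun k => le_ciSup (f := fun k => ‖dftv w k‖)
      (Set.Finite.bddAbove (Set.finite_range _)) k
  have hS0 : 0 ≤ S := le_trans (norm_nonneg _) (hSk ⟨0, hN⟩)
  set A : Matrix (Fin N) (Fin N) ℂ := Matrix.of (fun i j : Fin N => w (i + j)) with hAdef
  set f : Fin m → Fin N := Fin.castLE hmN with hfdef
  set g : Fin n → Fin N := Fin.castLE hnN with hgdef
  set E1 : Matrix (Fin m) (Fin N) ℂ :=
    (1 : Matrix (Fin N) (Fin N) ℂ).submatrix f (Equiv.refl (Fin N)) with hE1def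
  set E2 : Matrix (Fin N) (Fin n) ℂ :=
    (1 : Matrix (Fin N) (Fin N) ℂ).submatrix (Equiv.refl (Fin N)) g with hE2def
  have hfact : A.submatrix f g = E1 * A * E2 := by
    rw [hE1def, hE2def, Matrix.one_submatrix_mul f (Equiv.refl (Fin N)) A,
      Matrix.mul_submatrix_one (Equiv.refl (Fin N)) g]
    simp [Matrix.submatrix_submatrix]
  have hE1 : ‖E1‖ ≤ 1 := by
    have h11 : E1 * E1ᴴ = 1 := by
      ext i j
      simp [hE1def, Matrix.mul_apply, Matrix.one_apply, (Fin.castLE_injective hmN).eq_iff]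
      simp [hfdef, (Fin.castLE_injective hmN).eq_iff]
    have hc : ‖E1ᴴ‖ * ‖E1ᴴ‖ ≤ 1 := by
      rw [← Matrix.l2_opNorm_conjTranspose_mul_self, Matrix.conjTranspose_conjTranspose, h11]
      exact l2normOneLe _
    have he : ‖E1‖ = ‖E1ᴴ‖ := (Matrix.l2_opNorm_conjTranspose E1).symm
    rw [he]
    nlinarith [norm_nonneg E1ᴴ]
  have hE2 : ‖E2‖ ≤ 1 := by
    have h22 : E2ᴴ * E2 = 1 := by
      ext i j
      simp [hE2def, Matrix.mul_apply, Matrix.one_apply, (Fin.castLE_injective hnN).eq_iff]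
      simp [hgdef, (Fin.castLE_injective hnN).eq_iff]
    have hc : ‖E2‖ * ‖E2‖ ≤ 1 := by
      rw [← Matrix.l2_opNorm_conjTranspose_mul_self, h22]
      exact l2normOneLe _
    nlinarith [norm_nonneg E2]
  have hA : ‖A‖ ≤ S := by
    rw [hAdef, circulant_eq hN w]
    set M := dftMat N with hMdef
    set D := Matrix.diagonal (dftv w) with hDdef
    have hMn : ‖M‖ * ‖M‖ ≤ (N : ℝ) := by
      rw [← Matrix.l2_opNorm_conjTranspose_mul_self, dftMat_herm hN]
      calc ‖(N : ℂ) • (1 : Matrix (Fin N) (Fin N) ℂ)‖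
          = ‖(N:ℂ)‖ * ‖(1 : Matrix (Fin N) (Fin N) ℂ)‖ := norm_smul _ _
        _ ≤ (N : ℝ) * 1 := by
            have h5 : ‖(N:ℂ)‖ = (N : ℝ) := by simp
            rw [h5]
            exact mul_le_mul_of_nonneg_left (l2normOneLe _) (by positivity)
        _ = (N : ℝ) := mul_one _
    have hD : ‖D‖ ≤ S := l2normDiagLe _ _ hS0 (fun i => hSk i)
    have h1 : ‖M * (D * M)‖ ≤ ‖M‖ * (‖D‖ * ‖M‖) :=
      le_trans (Matrix.l2_opNorm_mul M (D * M))
        (mul_le_mul_of_nonneg_left (Matrix.l2_opNorm_mul D M) (norm_nonneg M))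
    have h2 : ‖((N:ℂ))⁻¹ • (M * (D * M))‖ = ((N:ℝ))⁻¹ * ‖M * (D * M)‖ := by
      rw [norm_smul]
      congr 1
      simp
    rw [h2]
    have hNpos : (0:ℝ) < N := by exact_mod_cast hN
    have hMnn : (0:ℝ) ≤ ‖M‖ := norm_nonneg _
    have hDnn : (0:ℝ) ≤ ‖D‖ := norm_nonneg _
    calc ((N:ℝ))⁻¹ * ‖M * (D * M)‖ ≤ ((N:ℝ))⁻¹ * (‖M‖ * (‖D‖ * ‖M‖)) :=
          mul_le_mul_of_nonneg_left h1 (by positivity)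
      _ ≤ ((N:ℝ))⁻¹ * ((N:ℝ) * S) := by
          apply mul_le_mul_of_nonneg_left _ (by positivity)
          nlinarith
      _ = S := by field_simp
  rw [hfact]
  calc ‖E1 * A * E2‖ ≤ ‖E1 * A‖ * ‖E2‖ := Matrix.l2_opNorm_mul _ _
    _ ≤ ‖E1‖ * ‖A‖ * ‖E2‖ :=
        mul_le_mul_of_nonneg_right (Matrix.l2_opNorm_mul _ _) (norm_nonneg _)
    _ ≤ 1 * S * 1 := by
        apply mul_le_mul (mul_le_mul hE1 hA (norm_nonneg _) zero_le_one) hE2 (norm_nonneg _)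
        linarith
    _ = S := by ring


/-- Let `w ∈ ℂ^{m+n-1}` and let `H_w` be the `m × n` Hankel matrix with
entries `(H_w)_{ij} = w_{i+j}`.  Then `‖H_w‖₂` is bounded by the largest modulus among
the entries of the (unnormalized) discrete Fourier transform of `w`:
`‖H_w‖₂ ≤ max_k |Σ_j e^{−2πi k j/(m+n−1)} w_j|`. -/
theorem hankel_norm_le_max_dft (m n : ℕ) (hm : 0 < m) (hn : 0 < n)
    (w : Fin (m + n - 1) → ℂ) :
    specNorm (hankel w) ≤
      ⨆ k : Fin (m + n - 1), ‖(∑ j : Fin (m + n - 1),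
        Complex.exp (-2 * (Real.pi : ℂ) * Complex.I * ((k : ℕ) : ℂ) * ((j : ℕ) : ℂ) /
          ((m + n - 1 : ℕ) : ℂ)) * w j)‖ := by
  have hN : 0 < m + n - 1 := by omega
  have hmN : m ≤ m + n - 1 := by omega
  have hnN : n ≤ m + n - 1 := by omega
  have hsub : hankel w =
      (Matrix.of (fun i j : Fin (m + n - 1) => w (i + j))).submatrix
        (Fin.castLE hmN) (Fin.castLE hnN) := by
    ext i j
    simp only [hankel, Matrix.submatrix_apply, Matrix.of_apply]
    congr 1
    apply Fin.ext
    simp only [Fin.add_def, Fin.coe_castLE]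
    exact (Nat.mod_eq_of_lt (by omega)).symm
  have h := hankel_aux hN w hmN hnN
  rw [specNorm, hsub]
  exact h
end
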